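/- Let G be an equationally Noetherian group with decidable word problem. Then every finitely generated, recursively presented group H that is residually G has decidable word problem. -/

import Mathlib

open Monoid

/-- Substitute words for generators: each letter `(i, b)` of `w` is replaced by the word
`c.getD i []` (if `b = true`) or its formal inverse (if `b = false`), and the results are
concatenated. -/
def substWord {m n : ℕ} (c : List (List (Fin m × Bool))) (w : List (Fin n × Bool)) :
    List (Fin m × Bool) :=
  (w.map fun p => bif p.2 then c.getD p.1.val [] else FreeGroup.invRev (c.getD p.1.val [])).flatten

theorem substWord_spec {G : Type} [Group G] {m n : ℕ} (πG : FreeGroup (Fin m) →* G)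
    (c : List (List (Fin m × Bool))) (w : List (Fin n × Bool)) :
    πG (FreeGroup.mk (substWord c w)) =
      FreeGroup.lift (fun i : Fin n => πG (FreeGroup.mk (c.getD i.val [])))
        (FreeGroup.mk w) := by
  induction w with
  | nil => simp [substWord, ← FreeGroup.one_eq_mk]
  | cons p w ih =>
    have h2 : substWord c (p :: w) =
        (bif p.2 then c.getD p.1.val [] else FreeGroup.invRev (c.getD p.1.val []))
          ++ substWord c w := by
      simp [substWord]
    have h1 : FreeGroup.mk (p :: w) = FreeGroup.mk [p] * FreeGroup.mk w := by
      rw [FreeGroup.mul_mk]; rfl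
    rw [h2, ← FreeGroup.mul_mk, map_mul, ih, h1, map_mul]
    congr 1
    obtain ⟨i, b⟩ := p
    cases b
    · simp only [Bool.cond_false, ← FreeGroup.inv_mk, map_inv, FreeGroup.lift_mk,
        List.map_cons, List.map_nil, List.prod_cons, List.prod_nil, Bool.cond_false, mul_one]
    · simp only [Bool.cond_true, FreeGroup.lift_mk, List.map_cons, List.map_nil,
        List.prod_cons, List.prod_nil, Bool.cond_true, mul_one]

theorem substWord_primrec {m n : ℕ} : Primrec₂ (substWord (m := m) (n := n)) := by
  have hinv : Primrec (FreeGroup.invRev (α := Fin m)) := by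
    have : Primrec fun w : List (Fin m × Bool) =>
        (w.map fun g : Fin m × Bool => (g.1, !g.2)).reverse :=
      Primrec.list_reverse.comp (Primrec.list_map Primrec.id
        ((Primrec.fst.comp Primrec.snd).pair (Primrec.not.comp (Primrec.snd.comp Primrec.snd))))
    exact this.of_eq fun w => by simp [FreeGroup.invRev]
  have hg : Primrec fun q : (List (List (Fin m × Bool)) × List (Fin n × Bool)) × (Fin n × Bool) =>
      q.1.1.getD q.2.1.val [] :=
    (Primrec.list_getD []).comp (Primrec.fst.comp Primrec.fst)
      (Primrec.fin_val.comp (Primrec.fst.comp Primrec.snd))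
  have hlet : Primrec fun q : (List (List (Fin m × Bool)) × List (Fin n × Bool)) × (Fin n × Bool) =>
      bif q.2.2 then q.1.1.getD q.2.1.val [] else FreeGroup.invRev (q.1.1.getD q.2.1.val []) :=
    Primrec.cond (Primrec.snd.comp Primrec.snd) hg (hinv.comp hg)
  exact Primrec.list_flatten.comp (Primrec.list_map Primrec.snd hlet)

/-- Let `G` be an equationally Noetherian group (every system of equations over `G` in
finitely many variables is equivalent to a finite subsystem) with decidable word problem
(with respect to a marking by a finite generating set). Then every finitely generated,
recursively presented group `H` that is residually `G` has decidable word problem. -/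
theorem decidable_word_problem_of_residually_equationallyNoetherian
    (G : Type) [Group G] (m : ℕ) (πG : FreeGroup (Fin m) →* G)
    (hπG : Function.Surjective πG)
    (hWP : ComputablePred fun w : List (Fin m × Bool) => πG (FreeGroup.mk w) = 1)
    (hEN : ∀ (n : ℕ) (Sys : Set (Coprod G (FreeGroup (Fin n)))),
      ∃ Sys0 : Set (Coprod G (FreeGroup (Fin n))), Sys0 ⊆ Sys ∧ Sys0.Finite ∧
        ∀ g : Fin n → G,
          (∀ σ ∈ Sys0, Coprod.lift (MonoidHom.id G) (FreeGroup.lift g) σ = 1) ↔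
          (∀ σ ∈ Sys, Coprod.lift (MonoidHom.id G) (FreeGroup.lift g) σ = 1))
    (H : Type) [Group H] (n : ℕ) (πH : FreeGroup (Fin n) →* H)
    (hπH : Function.Surjective πH)
    (hRP : REPred fun w : List (Fin n × Bool) => πH (FreeGroup.mk w) = 1)
    (hres : ∀ h : H, h ≠ 1 → ∃ f : H →* G, f h ≠ 1) :
    ComputablePred fun w : List (Fin n × Bool) => πH (FreeGroup.mk w) = 1 := by
  classical
  -- decision procedure for the word problem of G
  obtain ⟨fG, hfGc, hfGeq⟩ := ComputablePred.computable_iff.1 hWP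
  have hfG : ∀ w, fG w = true ↔ πG (FreeGroup.mk w) = 1 := by
    intro w
    have := congrFun hfGeq w
    simp only [eq_iff_iff] at this
    exact this.symm
  -- finite subsystem of the system of all relators of H
  obtain ⟨Sys0, hsub, hfin, hequiv⟩ :=
    hEN n ((fun w : List (Fin n × Bool) => Coprod.inr (FreeGroup.mk w)) ''
      {w | πH (FreeGroup.mk w) = 1})
  have hex : ∀ σ ∈ Sys0,
      ∃ w, πH (FreeGroup.mk w) = 1 ∧ Coprod.inr (FreeGroup.mk w) = σ := by
    intro σ hσ
    obtain ⟨w, hw, hwσ⟩ := hsub hσ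
    exact ⟨w, hw, hwσ⟩
  set wOf : Coprod G (FreeGroup (Fin n)) → List (Fin n × Bool) := fun σ =>
    if h : ∃ w, πH (FreeGroup.mk w) = 1 ∧ Coprod.inr (FreeGroup.mk w) = σ then h.choose
    else [] with hwOf
  set L : List (List (Fin n × Bool)) := hfin.toFinset.toList.map wOf with hLdef
  have hwOf_spec : ∀ σ ∈ Sys0, πH (FreeGroup.mk (wOf σ)) = 1 ∧
      Coprod.inr (FreeGroup.mk (wOf σ)) = σ := by
    intro σ hσ
    have h := hex σ hσ
    rw [hwOf]
    simp only [dif_pos h]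
    exact h.choose_spec
  have hL1 : ∀ r ∈ L, πH (FreeGroup.mk r) = 1 := by
    intro r hr
    rw [hLdef] at hr
    obtain ⟨σ, hσ, rfl⟩ := List.mem_map.1 hr
    have hσ' : σ ∈ Sys0 := (Set.Finite.mem_toFinset hfin).1 (Finset.mem_toList.1 hσ)
    exact (hwOf_spec σ hσ').1
  have hL2 : ∀ g : Fin n → G, (∀ r ∈ L, FreeGroup.lift g (FreeGroup.mk r) = 1) →
      ∀ w, πH (FreeGroup.mk w) = 1 → FreeGroup.lift g (FreeGroup.mk w) = 1 := by
    intro g hg w hw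
    have h0 : ∀ σ ∈ Sys0,
        Coprod.lift (MonoidHom.id G) (FreeGroup.lift g) σ = 1 := by
      intro σ hσ
      obtain ⟨h1, h2⟩ := hwOf_spec σ hσ
      have hmem : wOf σ ∈ L := by
        rw [hLdef]
        exact List.mem_map.2 ⟨σ, Finset.mem_toList.2 ((Set.Finite.mem_toFinset hfin).2 hσ), rfl⟩
      calc Coprod.lift (MonoidHom.id G) (FreeGroup.lift g) σ
          = Coprod.lift (MonoidHom.id G) (FreeGroup.lift g)
              (Coprod.inr (FreeGroup.mk (wOf σ))) := by rw [h2]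
        _ = FreeGroup.lift g (FreeGroup.mk (wOf σ)) := Coprod.lift_apply_inr _ _ _
        _ = 1 := hg _ hmem
    have h1 := (hequiv g).1 h0 (Coprod.inr (FreeGroup.mk w)) ⟨w, hw, rfl⟩
    rwa [Coprod.lift_apply_inr] at h1
  -- the verification predicate for the complement
  set check : List (List (Fin m × Bool)) → List (Fin n × Bool) → Bool := fun c w =>
    (L.all fun r => fG (substWord c r)) && !(fG (substWord c w)) with hcheckdef
  set Q : List (Fin n × Bool) → ℕ → Bool := fun w k =>
    Option.casesOn (Encodable.decode (α := List (List (Fin m × Bool))) k) false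
      (fun c => check c w) with hQdef
  -- computability of the all-relators check
  have hall : ∀ L' : List (List (Fin n × Bool)),
      Computable fun c : List (List (Fin m × Bool)) => L'.all fun r => fG (substWord c r) := by
    intro L'
    induction L' with
    | nil => exact (Computable.const true).of_eq fun c => by simp
    | cons r L' ih =>
      have h1 : Computable fun c : List (List (Fin m × Bool)) => fG (substWord c r) :=
        hfGc.comp (substWord_primrec.to_comp.comp Computable.id (Computable.const r))
      refine (Computable.cond h1 ih (Computable.const false)).of_eq fun c => ?_
      simp only [List.all_cons]
      cases fG (substWord c r) <;> simp
  have hcheckW : Computable₂ fun (w : List (Fin n × Bool)) (c : List (List (Fin m × Bool))) =>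
      check c w := by
    have h2 : Computable fun p : List (Fin n × Bool) × List (List (Fin m × Bool)) =>
        fG (substWord p.2 p.1) :=
      hfGc.comp (substWord_primrec.to_comp.comp Computable.snd Computable.fst)
    have h1 : Computable fun p : List (Fin n × Bool) × List (List (Fin m × Bool)) =>
        L.all fun r => fG (substWord p.2 r) := (hall L).comp Computable.snd
    refine (Computable.cond h1 (Primrec.not.to_comp.comp h2) (Computable.const false)).of_eq
      fun p => ?_
    rw [hcheckdef]
    cases h : (L.all fun r => fG (substWord p.2 r)) <;> simp [h]
  have hQ : Computable₂ Q := by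
    have hg : Computable fun p : (List (Fin n × Bool) × ℕ) × List (List (Fin m × Bool)) =>
        check p.2 p.1.1 :=
      hcheckW.comp (Computable.fst.comp Computable.fst) Computable.snd
    exact Computable.option_casesOn (Computable.decode.comp Computable.snd)
      (Computable.const false) hg
  -- the complement is r.e.
  have hre : REPred fun w : List (Fin n × Bool) => ¬πH (FreeGroup.mk w) = 1 := by
    have hpart : Partrec fun w : List (Fin n × Bool) =>
        Nat.rfind fun k => (Part.some (Q w k) : Part Bool) :=
      Partrec.rfind hQ.partrec₂
    refine hpart.dom_re.of_eq fun w => ?_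
    have hdom : (Nat.rfind fun k => (Part.some (Q w k) : Part Bool)).Dom ↔
        ∃ k, Q w k = true := by
      refine Nat.rfind_dom.trans ?_
      constructor
      · rintro ⟨k, hk, -⟩
        exact ⟨k, (Part.mem_some_iff.1 hk).symm⟩
      · rintro ⟨k, hk⟩
        exact ⟨k, Part.mem_some_iff.2 hk.symm, fun {_} _ => trivial⟩
    rw [hdom]
    constructor
    · -- a witness implies the word is nontrivial
      rintro ⟨k, hk⟩ hw1
      rw [hQdef] at hk
      simp only at hk
      rcases hdec : (Encodable.decode (α := List (List (Fin m × Bool))) k) with - | c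
      · rw [hdec] at hk; simp at hk
      rw [hdec] at hk
      simp only [hcheckdef, Bool.and_eq_true, Bool.not_eq_true', List.all_eq_true] at hk
      obtain ⟨hall1, hfalse⟩ := hk
      set g : Fin n → G := fun i => πG (FreeGroup.mk (c.getD i.val [])) with hgdef
      have hrel : ∀ r ∈ L, FreeGroup.lift g (FreeGroup.mk r) = 1 := by
        intro r hr
        rw [← substWord_spec πG c r]
        exact (hfG _).1 (hall1 r hr)
      have := hL2 g hrel w hw1
      rw [← substWord_spec πG c w] at this
      rw [(hfG _).2 this] at hfalse
      exact Bool.noConfusion hfalse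
    · -- a nontrivial word has a witness
      intro hw1
      obtain ⟨f, hf⟩ := hres (πH (FreeGroup.mk w)) hw1
      have hcw : ∀ i : Fin n, ∃ u : List (Fin m × Bool),
          πG (FreeGroup.mk u) = f (πH (FreeGroup.of i)) := by
        intro i
        obtain ⟨x, hx⟩ := hπG (f (πH (FreeGroup.of i)))
        exact ⟨x.toWord, by rw [FreeGroup.mk_toWord, hx]⟩
      choose cw hcwspec using hcw
      set c : List (List (Fin m × Bool)) := List.ofFn cw with hcdef
      have hcget : ∀ i : Fin n, c.getD i.val [] = cw i := by
        intro i
        rw [hcdef]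
        have hlen : i.val < (List.ofFn cw).length := by simp [i.isLt]
        rw [List.getD_eq_getElem _ _ hlen, List.getElem_ofFn]
      set g : Fin n → G := fun i => πG (FreeGroup.mk (c.getD i.val [])) with hgdef
      have hgf : ∀ x : FreeGroup (Fin n), FreeGroup.lift g x = f (πH x) := by
        intro x
        have : FreeGroup.lift g = (f.comp πH) := by
          apply FreeGroup.ext_hom
          intro a
          simp only [FreeGroup.lift_apply_of, MonoidHom.comp_apply, hgdef, hcget a, hcwspec a]
        rw [this]; rfl
      refine ⟨Encodable.encode c, ?_⟩
      rw [hQdef]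
      simp only [Encodable.encodek]
      rw [hcheckdef]
      simp only [Bool.and_eq_true, Bool.not_eq_true', List.all_eq_true]
      constructor
      · intro r hr
        refine (hfG _).2 ?_
        rw [substWord_spec πG c r, hgf, hL1 r hr, map_one]
      · rw [← Bool.not_eq_true, hfG, substWord_spec πG c w, hgf]
        exact hf
  exact ComputablePred.computable_iff_re_compl_re'.2 ⟨hRP, hre⟩
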